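/- Let R be a noetherian ring and M a finitely generated R-module with no nonzero projective direct summands, such that M decomposes as a finite direct sum of modules with local endomorphism rings. Then every endomorphism of M that factors through a projective module lies in the Jacobson radical of End_R(M). -/

import Mathlib

section AuxLemmas

/-- `1 - a*b` unit implies `1 - b*a` unit, in any ring. -/
private lemma isUnit_one_sub_swap {E : Type*} [Ring E] {a b : E}
    (h : IsUnit (1 - a * b)) : IsUnit (1 - b * a) := by
  obtain ⟨u, hu⟩ := h
  set d : E := ↑u⁻¹ with hd
  have h1 : (1 - a * b) * d = 1 := by rw [← hu]; exact u.mul_inv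
  have h2 : d * (1 - a * b) = 1 := by rw [← hu]; exact u.inv_mul
  have h1' : (a * b) * d = d - 1 := by
    rw [sub_mul, one_mul, sub_eq_iff_eq_add] at h1
    conv_rhs => rw [h1]
    abel
  have h2' : d * (a * b) = d - 1 := by
    rw [mul_sub, mul_one, sub_eq_iff_eq_add] at h2
    conv_rhs => rw [h2]
    abel
  refine ⟨⟨1 - b * a, 1 + b * d * a, ?_, ?_⟩, rfl⟩
  · have e1 : (1 - b * a) * (1 + b * d * a)
        = 1 + b * d * a - b * a - b * ((a * b) * d) * a := by noncomm_ring
    rw [e1, h1']; noncomm_ring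
  · have e1 : (1 + b * d * a) * (1 - b * a)
        = 1 + b * d * a - b * a - b * (d * (a * b)) * a := by noncomm_ring
    rw [e1, h2']; noncomm_ring

/-- The "swap" lemma across two different modules: if `1 - b ∘ a` is invertible
on `A`, then `1 - a ∘ b` is invertible on `B`. -/
private lemma isUnit_one_sub_comp {R A B : Type*} [Ring R] [AddCommGroup A] [Module R A]
    [AddCommGroup B] [Module R B] (a : A →ₗ[R] B) (b : B →ₗ[R] A)
    (h : IsUnit ((1 : Module.End R A) - b ∘ₗ a)) :
    IsUnit ((1 : Module.End R B) - a ∘ₗ b) := by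
  obtain ⟨u, hu⟩ := h
  set c : Module.End R A := ↑u⁻¹ with hc
  have h1 : (1 - b ∘ₗ a) * c = 1 := by rw [← hu]; exact u.mul_inv
  have h2 : c * (1 - b ∘ₗ a) = 1 := by rw [← hu]; exact u.inv_mul
  have h1' : (b ∘ₗ a) * c = c - 1 := by
    rw [sub_mul, one_mul, sub_eq_iff_eq_add] at h1
    conv_rhs => rw [h1]
    abel
  have h2' : c * (b ∘ₗ a) = c - 1 := by
    rw [mul_sub, mul_one, sub_eq_iff_eq_add] at h2
    conv_rhs => rw [h2]
    abel
  set p : Module.End R B := a ∘ₗ b with hp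
  set q : Module.End R B := a ∘ₗ (c ∘ₗ b) with hq
  have hpq : p * q = q - p := by
    have e1 : p * q = a ∘ₗ (((b ∘ₗ a) * c) ∘ₗ b) := by
      ext x; simp [hp, hq, Module.End.mul_apply]
    rw [e1, h1']
    ext x; simp [hp, hq]
  have hqp : q * p = q - p := by
    have e1 : q * p = a ∘ₗ ((c * (b ∘ₗ a)) ∘ₗ b) := by
      ext x; simp [hp, hq, Module.End.mul_apply]
    rw [e1, h2']
    ext x; simp [hp, hq]
  refine ⟨⟨1 - p, 1 + q, ?_, ?_⟩, rfl⟩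
  · have e1 : (1 - p) * (1 + q) = 1 + q - p - p * q := by noncomm_ring
    rw [e1, hpq]; abel
  · have e1 : (1 + q) * (1 - p) = 1 - p + q - q * p := by noncomm_ring
    rw [e1, hqp]; abel

private lemma srad_add {E : Type*} [Ring E] {a b : E}
    (ha : ∀ g : E, IsUnit (1 - g * a)) (hb : ∀ g : E, IsUnit (1 - g * b))
    (g : E) : IsUnit (1 - g * (a + b)) := by
  obtain ⟨u, hu⟩ := ha g
  set v : E := ↑u⁻¹ with hv
  have hv1 : v * (1 - g * a) = 1 := by rw [← hu]; exact u.inv_mul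
  have hb' : IsUnit (1 - g * b * v) := by
    have h0 : IsUnit (1 - v * (g * b)) := by
      have := hb (v * g); rwa [mul_assoc] at this
    exact isUnit_one_sub_swap h0
  have key : 1 - g * (a + b) = (1 - g * b * v) * (1 - g * a) := by
    have e1 : (1 - g * b * v) * (1 - g * a)
        = 1 - g * a - g * b * (v * (1 - g * a)) := by noncomm_ring
    rw [e1, hv1]; noncomm_ring
  rw [key]
  exact hb'.mul (ha g)

private lemma srad_sum {E : Type*} [Ring E] {ι : Type*} [DecidableEq ι] (s : Finset ι) (F : ι → E)
    (h : ∀ i ∈ s, ∀ g : E, IsUnit (1 - g * F i)) :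
    ∀ g : E, IsUnit (1 - g * ∑ i ∈ s, F i) := by
  induction s using Finset.induction_on with
  | empty => intro g; simp
  | @insert j s hj ih =>
      rw [Finset.sum_insert hj]
      exact srad_add (h j (Finset.mem_insert_self j s))
        (ih fun i hi => h i (Finset.mem_insert_of_mem hi))

end AuxLemmas

/-- An endomorphism of a module `M` *factors through a projective module* if it is
the composite of a map into some projective `R`-module followed by a map back to `M`. -/
def FactorsThroughProjective (R : Type) [Ring R] (M : Type) [AddCommGroup M]
    [Module R M] (f : Module.End R M) : Prop :=
  ∃ (P : Type) (_ : AddCommGroup P) (_ : Module R P), Module.Projective R P ∧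
    ∃ (g : M →ₗ[R] P) (h : P →ₗ[R] M), f = h.comp g

/-- Let `R` be a noetherian ring and `M` a finitely generated `R`-module with no
nonzero projective direct summands, which decomposes as a finite (internal) direct
sum of submodules with local endomorphism rings.  Then every endomorphism of `M`
factoring through a projective module lies in the Jacobson radical of `End_R(M)`. -/
theorem factorsThroughProjective_subset_jacobson
    (R : Type) [Ring R] [IsNoetherianRing R]
    (M : Type) [AddCommGroup M] [Module R M] [Module.Finite R M]
    -- no nonzero projective direct summands:
    (hnp : ∀ N : Submodule R M, (∃ N' : Submodule R M, IsCompl N N') →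
      Module.Projective R N → N = ⊥)
    -- finite direct sum decomposition into submodules with local endomorphism rings:
    (n : ℕ) (Mi : Fin n → Submodule R M) (hdec : DirectSum.IsInternal Mi)
    (hloc : ∀ i, IsLocalRing (Module.End R (Mi i)))
    (f : Module.End R M) (hf : FactorsThroughProjective R M f) :
    f ∈ (⊥ : TwoSidedIdeal (Module.End R M)).jacobson := by
  classical
  obtain ⟨P, _, _, hP, g, h, hfgh⟩ := hf
  -- the internal direct-sum structure maps
  let ι' : ∀ i, ↥(Mi i) →ₗ[R] M := fun i => (Mi i).subtype
  let e : (DirectSum (Fin n) fun i => ↥(Mi i)) ≃ₗ[R] M :=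
    LinearEquiv.ofBijective (DirectSum.coeLinearMap Mi) hdec
  let π : ∀ i, M →ₗ[R] ↥(Mi i) := fun i =>
    (DirectSum.component R (Fin n) (fun i => ↥(Mi i)) i) ∘ₗ
      (e.symm : M →ₗ[R] DirectSum (Fin n) fun i => ↥(Mi i))
  have hcoe : ∀ y : DirectSum (Fin n) fun i => ↥(Mi i),
      DirectSum.coeLinearMap Mi y = ∑ i, ((y i : M)) := by
    intro y
    induction y using DirectSum.induction_on with
    | zero => simp
    | of j m =>
        rw [DirectSum.coeLinearMap_of, Finset.sum_eq_single j]
        · rw [DirectSum.of_eq_same]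
        · intro i _ hij
          rw [DirectSum.of_eq_of_ne _ _ _ hij]
          simp
        · simp
    | add x y hx hy =>
        rw [map_add]
        simp only [DirectSum.add_apply, Submodule.coe_add]
        rw [hx, hy, Finset.sum_add_distrib]
  have hid : ∀ x : M, ∑ i, ι' i (π i x) = x := by
    intro x
    have h1 : e (e.symm x) = x := e.apply_symm_apply x
    have h2 : e (e.symm x) = ∑ i, ((e.symm x i : M)) := hcoe (e.symm x)
    rw [h1] at h2
    conv_rhs => rw [h2]
    exact Finset.sum_congr rfl fun i _ => rfl
  -- the components of f
  set s : Fin n → Fin n → Module.End R M :=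
    fun j i => ι' j ∘ₗ ((π j ∘ₗ (f ∘ₗ ι' i)) ∘ₗ π i) with hs_def
  have hfe : f = ∑ j, ∑ i, s j i := by
    ext x
    simp only [LinearMap.sum_apply, LinearMap.coe_comp, Function.comp_apply, hs_def]
    have hcol : ∀ j, ∑ i, ι' j (π j (f (ι' i (π i x)))) = ι' j (π j (f x)) := by
      intro j
      rw [← map_sum, ← map_sum, ← map_sum, hid x]
    calc f x = ∑ j, ι' j (π j (f x)) := (hid (f x)).symm
      _ = ∑ j, ∑ i, ι' j (π j (f (ι' i (π i x)))) := by
          exact Finset.sum_congr rfl fun j _ => (hcol j).symm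
  -- each component lies in the "strong radical"
  have hcomp : ∀ j i (G : Module.End R M), IsUnit (1 - G * s j i) := by
    intro j i G
    have hGs : G * s j i = (G ∘ₗ (ι' j ∘ₗ (π j ∘ₗ (f ∘ₗ ι' i)))) ∘ₗ π i := by
      ext x; simp [hs_def, Module.End.mul_apply]
    rw [hGs]
    apply isUnit_one_sub_comp
    haveI := hloc i
    set ψf : Module.End R (Mi i) :=
      π i ∘ₗ (G ∘ₗ (ι' j ∘ₗ (π j ∘ₗ (f ∘ₗ ι' i)))) with hψf
    rcases (hloc i).isUnit_or_isUnit_of_add_one (a := ψf) (b := 1 - ψf)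
      (by abel) with hun | h1
    · exfalso
      obtain ⟨u, hu⟩ := hun
      -- `Mi i` is then a direct summand of the projective module `P`
      have hsplit : (((↑u⁻¹ : Module.End R (Mi i)) ∘ₗ
          (π i ∘ₗ (G ∘ₗ (ι' j ∘ₗ (π j ∘ₗ h))))).comp (g ∘ₗ ι' i)) = LinearMap.id := by
        ext x
        have key : π i (G (ι' j (π j (h (g (ι' i x)))))) = (↑u : Module.End R (Mi i)) x := by
          rw [hu]
          simp [hψf, hfgh]
        simp only [LinearMap.coe_comp, Function.comp_apply, LinearMap.id_coe, id_eq]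
        rw [key]
        have h4 : (↑u⁻¹ : Module.End R (Mi i)) ((↑u : Module.End R (Mi i)) x) = x := by
          calc (↑u⁻¹ : Module.End R (Mi i)) ((↑u : Module.End R (Mi i)) x)
              = ((↑u⁻¹ * ↑u : Module.End R (Mi i))) x := rfl
            _ = x := by rw [u.inv_mul]; rfl
        exact congrArg Subtype.val h4
      haveI := hP
      have hproj : Module.Projective R (Mi i) :=
        Module.Projective.of_split (g ∘ₗ ι' i) _ hsplit
      -- `Mi i` is a direct summand of `M`
      have hdisj : Disjoint (Mi i) (⨆ j, ⨆ _ : j ≠ i, Mi j) :=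
        hdec.submodule_iSupIndep i
      have htop : (Mi i) ⊔ (⨆ j, ⨆ _ : j ≠ i, Mi j) = ⊤ := by
        rw [eq_top_iff, ← hdec.submodule_iSup_eq_top]
        refine iSup_le fun j => ?_
        rcases eq_or_ne j i with rfl | hne
        · exact le_sup_left
        · exact le_trans (le_iSup₂ (f := fun j (_ : j ≠ i) => Mi j) j hne) le_sup_right
      have hbot : Mi i = ⊥ :=
        hnp (Mi i) ⟨_, ⟨hdisj, codisjoint_iff.mpr htop⟩⟩ hproj
      haveI : Subsingleton (Mi i) := by rw [hbot]; infer_instance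
      haveI : Subsingleton (Module.End R (Mi i)) :=
        ⟨fun f g => LinearMap.ext fun x => Subsingleton.elim _ _⟩
      exact false_of_nontrivial_of_subsingleton (Module.End R (Mi i))
    · exact h1
  -- assemble
  have hfS : ∀ G : Module.End R M, IsUnit (1 - G * f) := by
    have := srad_sum Finset.univ (fun j => ∑ i, s j i)
      (fun j _ => srad_sum Finset.univ (s j) (fun i _ => hcomp j i))
    rwa [← hfe] at this
  rw [TwoSidedIdeal.mem_jacobson_iff]
  intro y
  obtain ⟨u, hu⟩ := hfS (-y)
  refine ⟨↑u⁻¹, ?_⟩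
  rw [TwoSidedIdeal.mem_bot]
  have h1 : (↑u : Module.End R M) = 1 + y * f := by rw [hu]; noncomm_ring
  have hinv : (↑u⁻¹ : Module.End R M) * (1 + y * f) = 1 := by
    rw [← h1]; exact u.inv_mul
  have e1 : (↑u⁻¹ : Module.End R M) * y * f + ↑u⁻¹ - 1
      = ↑u⁻¹ * (1 + y * f) - 1 := by noncomm_ring
  rw [e1, hinv, sub_self]
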